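/- Let L : C → D be a localization functor (left adjoint to a fully faithful inclusion), where C and D have finite products and geometric realizations (colimits over Δᵒᵖ), and suppose geometric realizations preserve finite products in both C and D. Let X•, Y• : Δᵒᵖ → C be simplicial objects with colimits X and Y. If for each n ≥ 0 the natural map L(X_n × Y_n) → L(X_n) × L(Y_n) is an isomorphism, then the natural map L(X × Y) → L(X) × L(Y) is an isomorphism. -/

import Mathlib

open CategoryTheory CategoryTheory.Limits

/-- Let `L : C ⥤ D` be a localization functor (left adjoint to a
fully faithful inclusion `ι : D ⥤ C`), where `C` and `D` have finite products and
geometric realizations (colimits of shape `Δᵒᵖ`), and suppose geometric realizations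
preserve finite products in both `C` and `D`.  Let `X•, Y• : Δᵒᵖ ⥤ C` be simplicial
objects with colimits `X` and `Y`.  If for each `n` the natural map
`L(Xₙ × Yₙ) ⟶ L Xₙ × L Yₙ` is an isomorphism, then the natural map
`L(X × Y) ⟶ L X × L Y` is an isomorphism. -/
theorem stmt_4 {C D : Type*} [Category C] [Category D]
    [HasFiniteProducts C] [HasFiniteProducts D]
    [HasColimitsOfShape SimplexCategoryᵒᵖ C] [HasColimitsOfShape SimplexCategoryᵒᵖ D]
    (L : C ⥤ D) (ι : D ⥤ C) [ι.Full] [ι.Faithful] (adj : L ⊣ ι)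
    (hC : PreservesFiniteProducts (colim : (SimplexCategoryᵒᵖ ⥤ C) ⥤ C))
    (hD : PreservesFiniteProducts (colim : (SimplexCategoryᵒᵖ ⥤ D) ⥤ D))
    (X' Y' : SimplexCategoryᵒᵖ ⥤ C)
    (h : ∀ n : SimplexCategoryᵒᵖ, IsIso (prodComparison L (X'.obj n) (Y'.obj n))) :
    IsIso (prodComparison L (colimit X') (colimit Y')) := by
  haveI := hC
  haveI := hD
  haveI := adj.leftAdjoint_preservesColimits
  set W : (SimplexCategoryᵒᵖ ⥤ C) ⥤ (SimplexCategoryᵒᵖ ⥤ D) :=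
    (Functor.whiskeringRight SimplexCategoryᵒᵖ C D).obj L with hW
  -- Step 1 : prodComparison W X' Y' is a (pointwise) isomorphism
  haveI : ∀ n : SimplexCategoryᵒᵖ, IsIso ((prodComparison W X' Y').app n) := by
    intro n
    haveI := h n
    have e1 := prodComparison_comp (F := W) (G := (evaluation SimplexCategoryᵒᵖ D).obj n)
      (A := X') (B := Y')
    have e2 := prodComparison_comp (F := (evaluation SimplexCategoryᵒᵖ C).obj n) (G := L)
      (A := X') (B := Y')
    have e0 : prodComparison (W ⋙ (evaluation SimplexCategoryᵒᵖ D).obj n) X' Y'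
        = prodComparison ((evaluation SimplexCategoryᵒᵖ C).obj n ⋙ L) X' Y' := rfl
    have e3 := e1.symm.trans (e0.trans e2)
    haveI : IsIso (prodComparison L (((evaluation SimplexCategoryᵒᵖ C).obj n).obj X')
        (((evaluation SimplexCategoryᵒᵖ C).obj n).obj Y')) := h n
    have e4 : ((evaluation SimplexCategoryᵒᵖ D).obj n).map (prodComparison W X' Y')
        = (L.map (prodComparison ((evaluation SimplexCategoryᵒᵖ C).obj n) X' Y')
            ≫ prodComparison L (((evaluation SimplexCategoryᵒᵖ C).obj n).obj X')
              (((evaluation SimplexCategoryᵒᵖ C).obj n).obj Y'))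
          ≫ inv (prodComparison ((evaluation SimplexCategoryᵒᵖ D).obj n) (W.obj X') (W.obj Y')) := by
      rw [IsIso.eq_comp_inv, e3]
    have e5 : IsIso (((evaluation SimplexCategoryᵒᵖ D).obj n).map (prodComparison W X' Y')) := by
      rw [e4]; infer_instance
    exact e5
  haveI : IsIso (prodComparison W X' Y') := NatIso.isIso_of_isIso_app _
  -- Step 2 : hence W preserves the binary product X' ⨯ Y', hence so does W ⋙ colim
  haveI : PreservesLimit (pair X' Y') W := PreservesLimitPair.of_iso_prod_comparison W X' Y'
  haveI : PreservesLimit (pair X' Y') (W ⋙ (colim : (SimplexCategoryᵒᵖ ⥤ D) ⥤ D)) :=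
    inferInstance
  -- Step 3 : transfer along the natural isomorphism colim ⋙ L ≅ W ⋙ colim
  haveI : PreservesLimit (pair X' Y') ((colim : (SimplexCategoryᵒᵖ ⥤ C) ⥤ C) ⋙ L) :=
    preservesLimit_of_natIso (pair X' Y') (preservesColimitNatIso L).symm
  -- Step 4 : conclude via `prodComparison_comp`
  haveI : IsIso (L.map (prodComparison colim X' Y')
      ≫ prodComparison L (colim.obj X') (colim.obj Y')) := by
    rw [← prodComparison_comp]
    infer_instance
  haveI : IsIso (prodComparison L (colim.obj X') (colim.obj Y')) :=
    IsIso.of_isIso_comp_left (L.map (prodComparison colim X' Y')) _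
  exact this
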